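/- Let G be an effective ample Hausdorff second-countable groupoid, R a field, and σ : G⁽²⁾ → Rˣ a continuous 2-cocycle. Let Q be a ring and π : A_R(G; σ) → Q a ring homomorphism. Then π is injective if and only if π(1_W) ≠ 0 for every nonempty compact open subset W of G⁽⁰⁾. -/

import Mathlib

open Set Function TopologicalSpace Classical
noncomputable section

universe u v w

/-- An étale topological groupoid, encoded with total operations:
`mul a b` is only meaningful when `src a = rng b`. -/
structure EtaleGroupoid (G : Type u) [TopologicalSpace G] where
  mul : G → G → G
  inv : G → G
  src : G → G
  rng : G → G
  rng_mul_self : ∀ g, mul (rng g) g = g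
  mul_src_self : ∀ g, mul g (src g) = g
  src_inv : ∀ g, src (inv g) = rng g
  rng_inv : ∀ g, rng (inv g) = src g
  inv_inv : ∀ g, inv (inv g) = g
  inv_mul_self : ∀ g, mul (inv g) g = src g
  mul_inv_self : ∀ g, mul g (inv g) = rng g
  mul_assoc' : ∀ a b c, src a = rng b → src b = rng c →
    mul (mul a b) c = mul a (mul b c)
  src_mul : ∀ a b, src a = rng b → src (mul a b) = src b
  rng_mul : ∀ a b, src a = rng b → rng (mul a b) = rng a
  continuous_inv : Continuous inv
  continuousOn_mul :
    ContinuousOn (fun p : G × G => mul p.1 p.2) {p : G × G | src p.1 = rng p.2}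
  isLocalHomeomorph_src : IsLocalHomeomorph src

namespace EtaleGroupoid

variable {G : Type u} [TopologicalSpace G] (𝒢 : EtaleGroupoid G)

/-- The unit space `G⁽⁰⁾`. -/
def unitSpace : Set G := Set.range 𝒢.src

/-- The isotropy bundle `Iso(G) = {γ : r γ = s γ}`. -/
def iso : Set G := {g | 𝒢.rng g = 𝒢.src g}

/-- The isotropy group `Gᵤᵘ` at a unit `u`. -/
def isoAt (u : G) : Set G := {g | 𝒢.rng g = u ∧ 𝒢.src g = u}

/-- `U` is a bisection: `src` and `rng` are injective on `U`. -/
def IsBisection (U : Set G) : Prop := Set.InjOn 𝒢.src U ∧ Set.InjOn 𝒢.rng U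

/-- `U` is a compact open bisection. -/
def IsCOB (U : Set G) : Prop := IsCompact U ∧ IsOpen U ∧ 𝒢.IsBisection U

/-- Pointwise inverse of a set. -/
def setInv (U : Set G) : Set G := 𝒢.inv '' U

/-- Pointwise product of two sets (only composable products). -/
def setMul (U V : Set G) : Set G :=
  {g | ∃ a ∈ U, ∃ b ∈ V, 𝒢.src a = 𝒢.rng b ∧ g = 𝒢.mul a b}

/-- `H` is a subgroupoid of `G`. -/
def IsSubgroupoid (H : Set G) : Prop :=
  (∀ a ∈ H, 𝒢.inv a ∈ H) ∧
  (∀ a ∈ H, ∀ b ∈ H, 𝒢.src a = 𝒢.rng b → 𝒢.mul a b ∈ H) ∧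
  (∀ a ∈ H, 𝒢.src a ∈ H)

/-- The groupoid is effective: the interior of the isotropy is the unit space. -/
def Effective : Prop := interior 𝒢.iso = 𝒢.unitSpace

/-- A continuous (i.e. locally constant) `Rˣ`-valued 2-cocycle on `G`. -/
def IsCocycle {R : Type w} [CommRing R] (c : G → G → Rˣ) : Prop :=
  IsLocallyConstant (fun p : {p : G × G // 𝒢.src p.1 = 𝒢.rng p.2} => c p.1.1 p.1.2) ∧
  (∀ a b d, 𝒢.src a = 𝒢.rng b → 𝒢.src b = 𝒢.rng d →
    c a b * c (𝒢.mul a b) d = c b d * c a (𝒢.mul b d)) ∧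
  (∀ g, c (𝒢.rng g) g = 1 ∧ c g (𝒢.src g) = 1)

/-- Membership in the (cocycle-twisted) Steinberg algebra `A_R(G)`:
locally constant, compactly supported functions `G → R`. -/
def MemSt {R : Type w} [CommRing R] (f : G → R) : Prop :=
  IsLocallyConstant f ∧ ∃ K : Set G, IsCompact K ∧ Function.support f ⊆ K

/-- Convolution on `A_R(G;σ)` twisted by a 2-cocycle `c`. -/
noncomputable def convC {R : Type w} [CommRing R] (c : G → G → Rˣ) (f g : G → R) :
    G → R := fun γ =>
  ∑ᶠ p : G × G,
    if 𝒢.src p.1 = 𝒢.rng p.2 ∧ 𝒢.mul p.1 p.2 = γ then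
      (c p.1 p.2 : R) * f p.1 * g p.2 else 0

/-- A continuous `Γ`-grading on `G` (for a discrete group `Γ`). -/
def IsGrading {Γ : Type*} [Group Γ] (c : G → Γ) : Prop :=
  IsLocallyConstant c ∧ ∀ a b, 𝒢.src a = 𝒢.rng b → c (𝒢.mul a b) = c a * c b

end EtaleGroupoid

/-- An ample groupoid: étale with a basis of compact open bisections. -/
structure AmpleGroupoid (G : Type u) [TopologicalSpace G] extends EtaleGroupoid G where
  ample : TopologicalSpace.IsTopologicalBasis {U : Set G | toEtaleGroupoid.IsCOB U}

/-- A discrete twist `G⁽⁰⁾ × Rˣ → Σ → G` over an ample groupoid `G`. -/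
structure DiscreteTwist (R : Type w) [CommRing R] {G : Type u} {S : Type v}
    [TopologicalSpace G] [TopologicalSpace S]
    (𝒢 : AmpleGroupoid G) (𝒮 : EtaleGroupoid S) where
  i : G → Rˣ → S
  q : S → G
  continuousOn_i : ∀ t : Rˣ, ContinuousOn (fun x => i x t) 𝒢.unitSpace
  continuous_q : Continuous q
  i_injOn : Set.InjOn (fun p : G × Rˣ => i p.1 p.2) (𝒢.unitSpace ×ˢ (Set.univ : Set Rˣ))
  q_surj : Function.Surjective q
  exact' : ∀ x ∈ 𝒢.unitSpace, q ⁻¹' {x} = {σ | ∃ t : Rˣ, σ = i x t}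
  i_mul : ∀ x ∈ 𝒢.unitSpace, ∀ s t : Rˣ, 𝒮.mul (i x s) (i x t) = i x (s * t)
  unit_eq : 𝒮.unitSpace = (fun x => i x 1) '' 𝒢.unitSpace
  q_mul : ∀ a b, 𝒮.src a = 𝒮.rng b → q (𝒮.mul a b) = 𝒢.mul (q a) (q b)
  q_inv : ∀ a, q (𝒮.inv a) = 𝒢.inv (q a)
  q_src : ∀ a, q (𝒮.src a) = 𝒢.src (q a)
  q_rng : ∀ a, q (𝒮.rng a) = 𝒢.rng (q a)
  q_unit_bij : Set.BijOn q 𝒮.unitSpace 𝒢.unitSpace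
  central : ∀ (σ : S) (t : Rˣ),
    𝒮.mul (i (𝒢.rng (q σ)) t) σ = 𝒮.mul σ (i (𝒢.src (q σ)) t)
  loc_triv : ∀ α : G, ∃ B : Set G, IsOpen B ∧ α ∈ B ∧ 𝒢.IsBisection B ∧
    ∃ P : G → S, ContinuousOn P B ∧ (∀ β ∈ B, q (P β) = β) ∧
      (∀ t : Rˣ, ContinuousOn (fun β => 𝒮.mul (i (𝒢.rng β) t) (P β)) B) ∧
      (∀ σ : S, q σ ∈ B →
        ∃! p : G × Rˣ, p.1 ∈ B ∧ 𝒮.mul (i (𝒢.rng p.1) p.2) (P p.1) = σ) ∧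
      (∀ t : Rˣ, ∀ V ⊆ B, IsOpen V →
        IsOpen ((fun β => 𝒮.mul (i (𝒢.rng β) t) (P β)) '' V))

namespace DiscreteTwist

variable {R : Type w} [CommRing R] {G : Type u} {S : Type v}
  [TopologicalSpace G] [TopologicalSpace S]
  {𝒢 : AmpleGroupoid G} {𝒮 : EtaleGroupoid S} (T : DiscreteTwist R 𝒢 𝒮)

/-- The action of `Rˣ` on `Σ`: `t • σ = i(r σ, t) σ`. -/
def act (t : Rˣ) (σ : S) : S := 𝒮.mul (T.i (𝒢.rng (T.q σ)) t) σ

/-- The function `1̃_X` associated to a subset `X ⊆ Σ`. -/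
noncomputable def tilde (X : Set S) : S → R := fun σ =>
  if h : ∃ t : Rˣ, σ ∈ T.act t '' X then (((Classical.choose h)⁻¹ : Rˣ) : R) else 0

/-- Membership in the twisted Steinberg algebra `A_R(G;Σ)`: locally constant,
`Rˣ`-contravariant functions with compact image of the support in `G`. -/
def MemA (f : S → R) : Prop :=
  IsLocallyConstant f ∧
  (∀ (t : Rˣ) (σ : S), f (T.act t σ) = ((t⁻¹ : Rˣ) : R) * f σ) ∧
  IsCompact (T.q '' Function.support f)

/-- A (not necessarily continuous) section of `q`. -/
noncomputable def sec : G → S := Function.surjInv T.q_surj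

/-- Convolution on `A_R(G;Σ)`, defined via the section `sec`. -/
noncomputable def conv (f g : S → R) : S → R := fun σ =>
  ∑ᶠ α : G,
    if 𝒢.rng α = 𝒢.rng (T.q σ) then
      f (T.sec α) * g (𝒮.mul (𝒮.inv (T.sec α)) σ) else 0

end DiscreteTwist

end

section AuxLemmas

namespace EtaleGroupoid

variable {G : Type u} [TopologicalSpace G] (E : EtaleGroupoid G)

lemma src_src' (g : G) : E.src (E.src g) = E.src g := by
  have h := E.src_mul (E.inv g) g (E.src_inv g)
  rwa [E.inv_mul_self] at h

lemma rng_src' (g : G) : E.rng (E.src g) = E.src g := by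
  have h := E.rng_mul (E.inv g) g (E.src_inv g)
  rwa [E.inv_mul_self, E.rng_inv] at h

lemma mem_unitSpace_iff' {u : G} : u ∈ E.unitSpace ↔ E.src u = u := by
  constructor
  · rintro ⟨x, rfl⟩; exact E.src_src' x
  · intro h; exact ⟨u, h⟩

lemma src_unit {u : G} (h : u ∈ E.unitSpace) : E.src u = u := (E.mem_unitSpace_iff').mp h

lemma rng_unit {u : G} (h : u ∈ E.unitSpace) : E.rng u = u := by
  obtain ⟨x, rfl⟩ := h; exact E.rng_src' x

lemma src_mem_unit (g : G) : E.src g ∈ E.unitSpace := ⟨g, rfl⟩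

lemma rng_mem_unit (g : G) : E.rng g ∈ E.unitSpace := ⟨E.inv g, E.src_inv g⟩

lemma continuous_src : Continuous E.src := E.isLocalHomeomorph_src.continuous

lemma continuous_rng : Continuous E.rng := by
  have : E.rng = E.src ∘ E.inv := funext fun g => (E.src_inv g).symm
  rw [this]; exact E.continuous_src.comp E.continuous_inv

lemma isOpen_unitSpace : IsOpen E.unitSpace :=
  E.isLocalHomeomorph_src.isOpenMap.isOpen_range

lemma isClosed_unitSpace [T2Space G] : IsClosed E.unitSpace := by
  have : E.unitSpace = {x | E.src x = x} := Set.ext fun _ => E.mem_unitSpace_iff'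
  rw [this]; exact isClosed_eq E.continuous_src continuous_id

lemma cancel_left {α β : G} (h : E.src α = E.rng β) :
    E.mul (E.inv α) (E.mul α β) = β := by
  rw [← E.mul_assoc' _ _ _ (E.src_inv α) h, E.inv_mul_self, h, E.rng_mul_self]

end EtaleGroupoid

end AuxLemmas

section AuxLemmas2

namespace EtaleGroupoid

variable {G : Type u} [TopologicalSpace G] (E : EtaleGroupoid G)
variable {R : Type w} [CommRing R]

lemma convC_unit_left (c : G → G → Rˣ) (hc1 : ∀ g, c (E.rng g) g = 1)
    {W : Set G} (hW : W ⊆ E.unitSpace) (κ : R) (g : G → R) (γ : G) :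
    E.convC c (W.indicator fun _ => κ) g γ = if E.rng γ ∈ W then κ * g γ else 0 := by
  have key : ∀ p : G × G,
      (if E.src p.1 = E.rng p.2 ∧ E.mul p.1 p.2 = γ then
        (c p.1 p.2 : R) * (W.indicator fun _ => κ) p.1 * g p.2 else 0) ≠ 0 →
      p = (E.rng γ, γ) ∧ E.rng γ ∈ W := by
    intro p hp
    split_ifs at hp with h
    · by_cases hp1 : p.1 ∈ W
      · have hu : E.src p.1 = p.1 := E.src_unit (hW hp1)
        have h1 : p.1 = E.rng p.2 := by rw [← hu]; exact h.1
        have h2 : p.2 = γ := by rw [← h.2, h1, E.rng_mul_self]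
        have h3 : p.1 = E.rng γ := by rw [h1, h2]
        exact ⟨Prod.ext h3 h2, h3 ▸ hp1⟩
      · exact absurd (by rw [Set.indicator_of_notMem hp1, mul_zero, zero_mul]) hp
    · exact absurd rfl hp
  unfold convC
  by_cases hr : E.rng γ ∈ W
  · rw [finsum_eq_single _ ((E.rng γ, γ) : G × G)
      (fun p hp => by by_contra hne; exact hp (key p hne).1)]
    have h1 : E.src (E.rng γ) = E.rng γ := E.src_unit (E.rng_mem_unit γ)
    rw [if_pos ⟨h1, E.rng_mul_self γ⟩, if_pos hr, Set.indicator_of_mem hr, hc1 γ,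
      Units.val_one, one_mul]
  · rw [finsum_eq_zero_of_forall_eq_zero
      (fun p => by by_contra hne; exact hr (key p hne).2), if_neg hr]

lemma convC_unit_right (c : G → G → Rˣ) (hc2 : ∀ g, c g (E.src g) = 1)
    {W : Set G} (hW : W ⊆ E.unitSpace) (κ : R) (g : G → R) (γ : G) :
    E.convC c g (W.indicator fun _ => κ) γ = if E.src γ ∈ W then g γ * κ else 0 := by
  have key : ∀ p : G × G,
      (if E.src p.1 = E.rng p.2 ∧ E.mul p.1 p.2 = γ then
        (c p.1 p.2 : R) * g p.1 * (W.indicator fun _ => κ) p.2 else 0) ≠ 0 →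
      p = (γ, E.src γ) ∧ E.src γ ∈ W := by
    intro p hp
    split_ifs at hp with h
    · by_cases hp2 : p.2 ∈ W
      · have hu : E.rng p.2 = p.2 := E.rng_unit (hW hp2)
        have h1 : p.2 = E.src p.1 := by rw [← hu]; exact h.1.symm
        have h2 : p.1 = γ := by rw [← h.2, h1, E.mul_src_self]
        have h3 : p.2 = E.src γ := by rw [h1, h2]
        exact ⟨Prod.ext h2 h3, h3 ▸ hp2⟩
      · exact absurd (by rw [Set.indicator_of_notMem hp2, mul_zero]) hp
    · exact absurd rfl hp
  unfold convC
  by_cases hr : E.src γ ∈ W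
  · rw [finsum_eq_single _ ((γ, E.src γ) : G × G)
      (fun p hp => by by_contra hne; exact hp (key p hne).1)]
    rw [if_pos ⟨(E.rng_src' γ).symm, E.mul_src_self γ⟩, if_pos hr,
      Set.indicator_of_mem hr, hc2 γ, Units.val_one, one_mul]
  · rw [finsum_eq_zero_of_forall_eq_zero
      (fun p => by by_contra hne; exact hr (key p hne).2), if_neg hr]

lemma exists_section [T2Space G] {D : Set G} (hDc : IsCompact D)
    (hinj : Set.InjOn E.src D) :
    ∃ sD : G → G, ContinuousOn sD (E.src '' D) ∧
      ∀ u ∈ E.src '' D, sD u ∈ D ∧ E.src (sD u) = u := by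
  classical
  set S := E.src '' D with hS
  have hbij : Function.Bijective (fun d : ↥D => (⟨E.src d.1, ⟨d.1, d.2, rfl⟩⟩ : ↥S)) := by
    constructor
    · rintro ⟨d₁, h₁⟩ ⟨d₂, h₂⟩ h
      have : E.src d₁ = E.src d₂ := congrArg Subtype.val h
      exact Subtype.ext (hinj h₁ h₂ this)
    · rintro ⟨u, d, hd, rfl⟩; exact ⟨⟨d, hd⟩, rfl⟩
  set e : ↥D ≃ ↥S := Equiv.ofBijective _ hbij with he
  have hcont : Continuous e :=
    Continuous.subtype_mk (E.continuous_src.comp continuous_subtype_val) _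
  have : CompactSpace ↥D := isCompact_iff_compactSpace.mp hDc
  set φ : ↥D ≃ₜ ↥S := hcont.homeoOfEquivCompactToT2 with hφ
  refine ⟨fun u => if h : u ∈ S then (φ.symm ⟨u, h⟩ : G) else u, ?_, ?_⟩
  · rw [continuousOn_iff_continuous_restrict]
    have : S.domRestrict (fun u => if h : u ∈ S then (φ.symm ⟨u, h⟩ : G) else u) =
        fun u : ↥S => (φ.symm u : G) := by
      funext u; simp only [Set.domRestrict_apply, dif_pos u.2]
    rw [this]
    exact continuous_subtype_val.comp φ.symm.continuous
  · intro u hu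
    simp only [dif_pos hu]
    refine ⟨(φ.symm ⟨u, hu⟩).2, ?_⟩
    have := φ.apply_symm_apply ⟨u, hu⟩
    exact congrArg Subtype.val this

lemma isCompact_setMul [T2Space G] {A K : Set G} (hA : IsCompact A) (hK : IsCompact K) :
    IsCompact (E.setMul A K) := by
  have hcl : IsClosed {p : G × G | E.src p.1 = E.rng p.2} :=
    isClosed_eq (E.continuous_src.comp continuous_fst) (E.continuous_rng.comp continuous_snd)
  have hC : IsCompact ((A ×ˢ K) ∩ {p : G × G | E.src p.1 = E.rng p.2}) :=
    (hA.prod hK).inter_right hcl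
  have himg : E.setMul A K =
      (fun p : G × G => E.mul p.1 p.2) '' ((A ×ˢ K) ∩ {p | E.src p.1 = E.rng p.2}) := by
    ext γ
    constructor
    · rintro ⟨a, ha, b, hb, hcond, rfl⟩; exact ⟨(a, b), ⟨⟨ha, hb⟩, hcond⟩, rfl⟩
    · rintro ⟨⟨a, b⟩, ⟨⟨ha, hb⟩, hcond⟩, rfl⟩; exact ⟨a, ha, b, hb, hcond, rfl⟩
  rw [himg]
  exact hC.image_of_continuousOn (E.continuousOn_mul.mono inter_subset_right)

lemma memSt_indicator {R : Type w} [CommRing R] [T2Space G] {V : Set G}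
    (hVc : IsCompact V) (hVo : IsOpen V) (κ : R) :
    MemSt (V.indicator fun _ => κ) := by
  constructor
  · rw [IsLocallyConstant.iff_exists_open]
    intro x
    by_cases hx : x ∈ V
    · exact ⟨V, hVo, hx, fun y hy => by
        rw [Set.indicator_of_mem hy, Set.indicator_of_mem hx]⟩
    · exact ⟨Vᶜ, hVc.isClosed.isOpen_compl, hx, fun y hy => by
        rw [Set.indicator_of_notMem hy, Set.indicator_of_notMem hx]⟩
  · exact ⟨V, hVc, Set.support_indicator_subset⟩

lemma memSt_zero {R : Type w} [CommRing R] : MemSt (0 : G → R) :=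
  ⟨IsLocallyConstant.const 0, ∅, isCompact_empty, by simp⟩

lemma memSt_neg {R : Type w} [CommRing R] {f : G → R} (hf : MemSt f) : MemSt (-f) := by
  obtain ⟨K, hKc, hKs⟩ := hf.2
  refine ⟨hf.1.neg, K, hKc, fun x hx => hKs ?_⟩
  intro h0
  exact hx (by simp [Pi.neg_apply, h0])

lemma memSt_add {R : Type w} [CommRing R] {f g : G → R} (hf : MemSt f) (hg : MemSt g) :
    MemSt (f + g) := by
  obtain ⟨K₁, h₁c, h₁s⟩ := hf.2
  obtain ⟨K₂, h₂c, h₂s⟩ := hg.2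
  exact ⟨hf.1.add hg.1, K₁ ∪ K₂, h₁c.union h₂c,
    (Function.support_add f g).trans (Set.union_subset_union h₁s h₂s)⟩

end EtaleGroupoid

end AuxLemmas2

section AuxLemmas3

namespace EtaleGroupoid

variable {G : Type u} [TopologicalSpace G] (E : EtaleGroupoid G)
variable {R : Type w} [CommRing R]

lemma convC_invB (c : G → G → Rˣ) (f : G → R) {B : Set G}
    (hinj : Set.InjOn E.src B) {sB : G → G}
    (hsB : ∀ u ∈ E.src '' B, sB u ∈ B ∧ E.src (sB u) = u) (γ : G) :
    E.convC c ((E.inv '' B).indicator fun _ => (1 : R)) f γ =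
      if h : E.rng γ ∈ E.src '' B then
        (c (E.inv (sB (E.rng γ))) (E.mul (sB (E.rng γ)) γ) : R) * f (E.mul (sB (E.rng γ)) γ)
      else 0 := by
  have key : ∀ p : G × G,
      (if E.src p.1 = E.rng p.2 ∧ E.mul p.1 p.2 = γ then
        (c p.1 p.2 : R) * ((E.inv '' B).indicator fun _ => (1 : R)) p.1 * f p.2 else 0) ≠ 0 →
      E.rng γ ∈ E.src '' B ∧
        p = (E.inv (sB (E.rng γ)), E.mul (sB (E.rng γ)) γ) := by
    intro p hp
    split_ifs at hp with h
    · by_cases hp1 : p.1 ∈ E.inv '' B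
      · obtain ⟨b', hb', hb'e⟩ := hp1
        have hrr : E.rng p.1 = E.rng γ := by
          rw [← h.2]; exact (E.rng_mul p.1 p.2 h.1).symm
        have hsrc : E.src b' = E.rng γ := by
          rw [← hrr, ← hb'e, E.rng_inv]
        have hmemS : E.rng γ ∈ E.src '' B := ⟨b', hb', hsrc⟩
        obtain ⟨hbB, hbsrc⟩ := hsB (E.rng γ) hmemS
        have hb'b : b' = sB (E.rng γ) := hinj hb' hbB (by rw [hsrc, hbsrc])
        have hp1e : p.1 = E.inv (sB (E.rng γ)) := by rw [← hb'e, hb'b]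
        have hp2e : p.2 = E.mul (sB (E.rng γ)) γ := by
          have := E.cancel_left h.1
          rw [h.2] at this
          rw [← this, ← hb'e, E.inv_inv, hb'b]
        exact ⟨hmemS, Prod.ext hp1e hp2e⟩
      · exact absurd (by rw [Set.indicator_of_notMem hp1, mul_zero, zero_mul]) hp
    · exact absurd rfl hp
  unfold convC
  by_cases hr : E.rng γ ∈ E.src '' B
  · rw [finsum_eq_single _ ((E.inv (sB (E.rng γ)), E.mul (sB (E.rng γ)) γ) : G × G)
      (fun p hp => by by_contra hne; exact hp (key p hne).2)]
    obtain ⟨hbB, hbsrc⟩ := hsB (E.rng γ) hr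
    have hcond1 : E.src (E.inv (sB (E.rng γ))) = E.rng (E.mul (sB (E.rng γ)) γ) := by
      rw [E.src_inv, E.rng_mul _ _ hbsrc]
    have hcond2 : E.mul (E.inv (sB (E.rng γ))) (E.mul (sB (E.rng γ)) γ) = γ :=
      E.cancel_left hbsrc
    rw [if_pos ⟨hcond1, hcond2⟩, dif_pos hr,
      Set.indicator_of_mem (Set.mem_image_of_mem E.inv hbB), mul_one]
  · rw [finsum_eq_zero_of_forall_eq_zero
      (fun p => by by_contra hne; exact hr (key p hne).1), dif_neg hr]

lemma memSt_convC_invB [T2Space G] (c : G → G → Rˣ)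
    (hlc : IsLocallyConstant (fun p : {p : G × G // E.src p.1 = E.rng p.2} => c p.1.1 p.1.2))
    {B : Set G} (hBc : IsCompact B) (hBo : IsOpen B) (hinj : Set.InjOn E.src B)
    {f : G → R} (hf : MemSt f) {sB : G → G}
    (hsBc : ContinuousOn sB (E.src '' B))
    (hsB : ∀ u ∈ E.src '' B, sB u ∈ B ∧ E.src (sB u) = u) :
    MemSt (E.convC c ((E.inv '' B).indicator fun _ => (1 : R)) f) := by
  classical
  set S := E.src '' B with hSdef
  have hform : ∀ γ, E.convC c ((E.inv '' B).indicator fun _ => (1 : R)) f γ =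
      if h : E.rng γ ∈ S then
        (c (E.inv (sB (E.rng γ))) (E.mul (sB (E.rng γ)) γ) : R) * f (E.mul (sB (E.rng γ)) γ)
      else 0 := fun γ => E.convC_invB c f hinj hsB γ
  have hSo : IsOpen S := E.isLocalHomeomorph_src.isOpenMap B hBo
  have hSc : IsClosed S := (hBc.image E.continuous_src).isClosed
  set V₀ : Set G := E.rng ⁻¹' S with hV₀def
  have hV₀ : IsOpen V₀ := hSo.preimage E.continuous_rng
  have hsrcθ : ∀ y : ↥V₀, E.src (sB (E.rng y.1)) = E.rng (y.1 : G) := fun y => (hsB _ y.2).2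
  have hθ : Continuous (fun y : ↥V₀ => sB (E.rng y.1)) := by
    have h1 : Continuous (fun y : ↥V₀ => (⟨E.rng y.1, y.2⟩ : ↥S)) :=
      Continuous.subtype_mk (E.continuous_rng.comp continuous_subtype_val) _
    have h2 : Continuous (S.restrict sB) := continuousOn_iff_continuous_restrict.mp hsBc
    exact h2.comp h1
  have hmulθ : Continuous (fun y : ↥V₀ => E.mul (sB (E.rng y.1)) y.1) := by
    have h1 : Continuous (fun y : ↥V₀ =>
        (⟨(sB (E.rng y.1), y.1), hsrcθ y⟩ : {p : G × G // E.src p.1 = E.rng p.2})) :=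
      Continuous.subtype_mk (hθ.prodMk continuous_subtype_val) _
    have h2 : Continuous ({p : G × G | E.src p.1 = E.rng p.2}.restrict
        (fun p : G × G => E.mul p.1 p.2)) := continuousOn_iff_continuous_restrict.mp E.continuousOn_mul
    exact h2.comp h1
  have hΦ : Continuous (fun y : ↥V₀ =>
      (⟨(E.inv (sB (E.rng y.1)), E.mul (sB (E.rng y.1)) y.1), by
          rw [E.src_inv, E.rng_mul _ _ (hsrcθ y)]⟩ :
        {p : G × G // E.src p.1 = E.rng p.2})) :=
    Continuous.subtype_mk ((E.continuous_inv.comp hθ).prodMk hmulθ) _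
  set ψ : ↥V₀ → R := fun y =>
    (c (E.inv (sB (E.rng y.1))) (E.mul (sB (E.rng y.1)) y.1) : R) *
      f (E.mul (sB (E.rng y.1)) y.1) with hψdef
  have hψlc : IsLocallyConstant ψ := by
    have l1 : IsLocallyConstant (fun y : ↥V₀ =>
        ((c (E.inv (sB (E.rng y.1))) (E.mul (sB (E.rng y.1)) y.1) : Rˣ) : R)) :=
      (hlc.comp_continuous hΦ).comp Units.val
    have l2 : IsLocallyConstant (fun y : ↥V₀ => f (E.mul (sB (E.rng y.1)) y.1)) :=
      hf.1.comp_continuous hmulθ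
    exact l1.mul l2
  constructor
  · rw [IsLocallyConstant.iff_exists_open]
    intro x
    by_cases hx : E.rng x ∈ S
    · obtain ⟨Us, hUso, hxUs, hconst⟩ :=
        (IsLocallyConstant.iff_exists_open ψ).mp hψlc ⟨x, hx⟩
      obtain ⟨U', hU'o, hU'e⟩ := isOpen_induced_iff.mp hUso
      refine ⟨U' ∩ V₀, hU'o.inter hV₀, ⟨by rw [← hU'e] at hxUs; exact hxUs, hx⟩, ?_⟩
      intro y hy
      have hyV : y ∈ V₀ := hy.2
      have hyUs : (⟨y, hyV⟩ : ↥V₀) ∈ Us := by rw [← hU'e]; exact hy.1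
      have := hconst ⟨y, hyV⟩ hyUs
      rw [hform y, hform x, dif_pos (show E.rng y ∈ S from hyV), dif_pos hx]
      exact this
    · refine ⟨E.rng ⁻¹' Sᶜ, (hSc.isOpen_compl).preimage E.continuous_rng, hx, ?_⟩
      intro y hy
      rw [hform y, hform x, dif_neg hy, dif_neg hx]
  · obtain ⟨K, hKc, hKs⟩ := hf.2
    refine ⟨E.setMul (E.inv '' B) K, E.isCompact_setMul (hBc.image E.continuous_inv) hKc, ?_⟩
    intro γ hγ
    rw [Function.mem_support, hform γ] at hγ
    by_cases hcase : E.rng γ ∈ S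
    · rw [dif_pos hcase] at hγ
      obtain ⟨hbB, hbsrc⟩ := hsB (E.rng γ) hcase
      have hfne : f (E.mul (sB (E.rng γ)) γ) ≠ 0 := fun h0 => hγ (by rw [h0, mul_zero])
      refine ⟨E.inv (sB (E.rng γ)), Set.mem_image_of_mem E.inv hbB,
        E.mul (sB (E.rng γ)) γ, hKs hfne, ?_, (E.cancel_left hbsrc).symm⟩
      rw [E.src_inv, E.rng_mul _ _ hbsrc]
    · rw [dif_neg hcase] at hγ; exact absurd rfl hγ

lemma shrink [T2Space G] (heff : E.Effective)
    {D : Set G} (hDc : IsCompact D) (hDo : IsOpen D) (hinj : Set.InjOn E.src D)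
    (hDu : D ∩ E.unitSpace = ∅) {U : Set G} (hUo : IsOpen U) (hUne : U.Nonempty) :
    ∃ W, IsOpen W ∧ W.Nonempty ∧ W ⊆ U ∧
      ∀ d ∈ D, ¬(E.rng d ∈ W ∧ E.src d ∈ W) := by
  obtain ⟨sD, hsDc, hsD⟩ := E.exists_section hDc hinj
  set S := E.src '' D with hSdef
  have hSc : IsClosed S := (hDc.image E.continuous_src).isClosed
  have hSo : IsOpen S := E.isLocalHomeomorph_src.isOpenMap D hDo
  by_cases hcase : (U \ S).Nonempty
  · exact ⟨U \ S, hUo.sdiff hSc, hcase, diff_subset,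
      fun d hd h => h.2.2 ⟨d, hd, rfl⟩⟩
  · have hUS : U ⊆ S := fun u hu => by_contra fun h => hcase ⟨u, hu, h⟩
    by_cases hfix : ∃ u ∈ U, E.rng (sD u) ≠ u
    · obtain ⟨u, huU, hne⟩ := hfix
      obtain ⟨V₁, V₂, hV₁, hV₂, hr₁, hu₂, hdisj⟩ := t2_separation hne
      have hcont : ContinuousOn (fun x => E.rng (sD x)) S :=
        E.continuous_rng.comp_continuousOn hsDc
      have hO : IsOpen (S ∩ (fun x => E.rng (sD x)) ⁻¹' V₁) :=
        hcont.isOpen_inter_preimage hSo hV₁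
      refine ⟨U ∩ V₂ ∩ (S ∩ (fun x => E.rng (sD x)) ⁻¹' V₁),
        (hUo.inter hV₂).inter hO, ⟨u, ⟨huU, hu₂⟩, hUS huU, hr₁⟩,
        fun x hx => hx.1.1, ?_⟩
      rintro d hd ⟨hrd, hsd⟩
      have hsdS : E.src d ∈ S := hsd.2.1
      have hde : sD (E.src d) = d := hinj (hsD _ hsdS).1 hd (hsD _ hsdS).2
      have hrdV₁ : E.rng d ∈ V₁ := by
        have := hsd.2.2
        rwa [Set.mem_preimage, hde] at this
      exact Set.disjoint_left.mp hdisj hrdV₁ hrd.1.2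
    · exfalso
      push_neg at hfix
      obtain ⟨u₀, hu₀⟩ := hUne
      have hd₀ := hsD u₀ (hUS hu₀)
      have hsub : D ∩ E.src ⁻¹' U ⊆ interior E.iso := by
        apply interior_maximal ?_ (hDo.inter (hUo.preimage E.continuous_src))
        rintro d ⟨hdD, hdU⟩
        have hde : sD (E.src d) = d := hinj (hsD _ (hUS hdU)).1 hdD (hsD _ (hUS hdU)).2
        have h1 := hfix (E.src d) hdU
        rw [hde] at h1
        exact h1
      have hmem : sD u₀ ∈ D ∩ E.src ⁻¹' U := ⟨hd₀.1, by rw [Set.mem_preimage, hd₀.2]; exact hu₀⟩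
      have : sD u₀ ∈ E.unitSpace := by
        have h2 := hsub hmem
        rwa [heff] at h2
      exact Set.eq_empty_iff_forall_notMem.mp hDu (sD u₀) ⟨hd₀.1, this⟩

lemma shrink_finset [T2Space G] (heff : E.Effective) {ι : Type*} (t : Finset ι)
    (V : ι → Set G) {U : Set G} (hUo : IsOpen U) (hUne : U.Nonempty) :
    (∀ j ∈ t, IsCompact (V j) ∧ IsOpen (V j) ∧ Set.InjOn E.src (V j) ∧
      V j ∩ E.unitSpace = ∅) →
    ∃ W, IsOpen W ∧ W.Nonempty ∧ W ⊆ U ∧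
      ∀ j ∈ t, ∀ d ∈ V j, ¬(E.rng d ∈ W ∧ E.src d ∈ W) := by
  classical
  induction t using Finset.induction_on with
  | empty =>
    exact fun _ => ⟨U, hUo, hUne, subset_rfl,
      fun j hj => absurd hj (Finset.notMem_empty j)⟩
  | @insert j s hjs ih =>
    intro hV
    obtain ⟨W, hWo, hWne, hWU, hWavoid⟩ := ih (fun k hk => hV k (Finset.mem_insert_of_mem hk))
    obtain ⟨hc, ho, hi, hu⟩ := hV j (Finset.mem_insert_self j s)
    obtain ⟨W', h'o, h'ne, h'sub, h'avoid⟩ := E.shrink heff hc ho hi hu hWo hWne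
    refine ⟨W', h'o, h'ne, h'sub.trans hWU, ?_⟩
    intro k hk d hd hrs
    rcases Finset.mem_insert.mp hk with rfl | hk
    · exact h'avoid d hd hrs
    · exact hWavoid k hk d hd ⟨h'sub hrs.1, h'sub hrs.2⟩

end EtaleGroupoid

end AuxLemmas3

/-- for an effective ample Hausdorff second-countable groupoid
`G`, a field `R` and a continuous 2-cocycle `σ : G⁽²⁾ → Rˣ`, a ring homomorphism
`π : A_R(G;σ) → Q` is injective iff `π(1_W) ≠ 0` for every nonempty compact open
`W ⊆ G⁽⁰⁾`. -/
theorem stmt_11 {R : Type*} [Field R] {G : Type*}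
    [TopologicalSpace G] [T2Space G] [SecondCountableTopology G]
    (𝒢 : AmpleGroupoid G) (heff : 𝒢.Effective)
    (c : G → G → Rˣ) (hc : 𝒢.IsCocycle c)
    {Q : Type*} [Ring Q] (π : (G → R) → Q)
    (hzero : π 0 = 0)
    (hadd : ∀ f g : G → R, EtaleGroupoid.MemSt f → EtaleGroupoid.MemSt g → π (f + g) = π f + π g)
    (hmul : ∀ f g : G → R, EtaleGroupoid.MemSt f → EtaleGroupoid.MemSt g → π (𝒢.convC c f g) = π f * π g) :
    Set.InjOn π {f : G → R | EtaleGroupoid.MemSt f} ↔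
      ∀ W : Set G, W ⊆ 𝒢.unitSpace → W.Nonempty → IsCompact W → IsOpen W →
        π (W.indicator fun _ => (1 : R)) ≠ 0 := by
  classical
  set E := 𝒢.toEtaleGroupoid with hEdef
  obtain ⟨hclc, hccoc, hcunit⟩ := hc
  have hc1 : ∀ g, c (E.rng g) g = 1 := fun g => (hcunit g).1
  have hc2 : ∀ g, c g (E.src g) = 1 := fun g => (hcunit g).2
  constructor
  · -- injective ⟹ nonvanishing on unit indicators
    intro hinj W hWu hWne hWc hWo hcontra
    have h1 : EtaleGroupoid.MemSt (W.indicator fun _ => (1 : R)) :=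
      EtaleGroupoid.memSt_indicator hWc hWo 1
    have h0 : EtaleGroupoid.MemSt (0 : G → R) := EtaleGroupoid.memSt_zero
    have heq : (W.indicator fun _ => (1 : R)) = (0 : G → R) :=
      hinj h1 h0 (by rw [hcontra, hzero])
    obtain ⟨w, hw⟩ := hWne
    have := congrFun heq w
    rw [Set.indicator_of_mem hw] at this
    exact one_ne_zero this
  · -- nonvanishing ⟹ injective
    intro hW
    have key : ∀ f : G → R, EtaleGroupoid.MemSt f → π f = 0 → f = 0 := by
      intro f hf hπf
      by_contra hfne
      obtain ⟨γ₀, hγ₀⟩ : (Function.support f).Nonempty :=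
        Function.support_nonempty_iff.mpr hfne
      have hsuppo : IsOpen (Function.support f) := by
        have : Function.support f = f ⁻¹' {0}ᶜ := by
          ext x; simp [Function.mem_support]
        rw [this]; exact hf.1 _
      obtain ⟨B, hBmem, hγ₀B, hBsub⟩ := 𝒢.ample.exists_subset_of_mem_open hγ₀ hsuppo
      obtain ⟨hBc, hBo, hBinjs, hBinjr⟩ := hBmem
      obtain ⟨sB, hsBc, hsB⟩ := E.exists_section hBc hBinjs
      set f₁ : G → R := (E.inv '' B).indicator (fun _ => (1 : R)) with hf₁def
      have hinvBc : IsCompact (E.inv '' B) := hBc.image E.continuous_inv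
      have hinvBo : IsOpen (E.inv '' B) := by
        have himg : E.inv '' B = E.inv ⁻¹' B := by
          ext x
          constructor
          · rintro ⟨b, hb, rfl⟩; simpa [E.inv_inv] using hb
          · intro hx; exact ⟨E.inv x, hx, E.inv_inv x⟩
        rw [himg]; exact hBo.preimage E.continuous_inv
      have hmemf₁ : EtaleGroupoid.MemSt f₁ := EtaleGroupoid.memSt_indicator hinvBc hinvBo 1
      set h : G → R := E.convC c f₁ f with hhdef
      have hπh : π h = 0 := by
        rw [hhdef, hmul f₁ f hmemf₁ hf, hπf, mul_zero]
      have hform : ∀ γ, h γ =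
          if hcase : E.rng γ ∈ E.src '' B then
            (c (E.inv (sB (E.rng γ))) (E.mul (sB (E.rng γ)) γ) : R) *
              f (E.mul (sB (E.rng γ)) γ)
          else 0 := fun γ => E.convC_invB c f hBinjs hsB γ
      have hmemh : EtaleGroupoid.MemSt h :=
        E.memSt_convC_invB c hclc hBc hBo hBinjs hf hsBc hsB
      -- value at the unit u₀
      set u₀ := E.src γ₀ with hu₀def
      have hu₀S : u₀ ∈ E.src '' B := ⟨γ₀, hγ₀B, rfl⟩
      set b₀ := sB u₀ with hb₀def
      obtain ⟨hb₀B, hb₀src⟩ := hsB u₀ hu₀S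
      have hrngu₀ : E.rng u₀ = u₀ := E.rng_src' γ₀
      have hmulb₀ : E.mul b₀ u₀ = b₀ := by
        conv_lhs => rw [← hb₀src]
        exact E.mul_src_self b₀
      have hhu₀ : h u₀ = (c (E.inv b₀) b₀ : R) * f b₀ := by
        rw [hform u₀]
        rw [dif_pos (by rwa [hrngu₀] : E.rng u₀ ∈ E.src '' B)]
        congr 2 <;> rw [hrngu₀, ← hb₀def, hmulb₀]
      set a := h u₀ with hadef
      have ha0 : a ≠ 0 := by
        rw [hhu₀]
        exact mul_ne_zero (Units.ne_zero _) (hBsub hb₀B)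
      -- support of h
      have hsupph_o : IsOpen (Function.support h) := by
        have : Function.support h = h ⁻¹' {0}ᶜ := by
          ext x; simp [Function.mem_support]
        rw [this]; exact hmemh.1 _
      have hsupph_cl : IsClosed (Function.support h) := by
        have : Function.support h = (h ⁻¹' {0})ᶜ := by
          ext x; simp [Function.mem_support]
        rw [this]; exact (hmemh.1 _).isClosed_compl
      obtain ⟨K', hK'c, hK's⟩ := hmemh.2
      have hsupph_cpt : IsCompact (Function.support h) :=
        hK'c.of_isClosed_subset hsupph_cl hK's
      set Dset := Function.support h \ E.unitSpace with hDdef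
      have hDo : IsOpen Dset := hsupph_o.sdiff E.isClosed_unitSpace
      have hDcl : IsClosed Dset := hsupph_cl.inter E.isOpen_unitSpace.isClosed_compl
      have hDc : IsCompact Dset := hsupph_cpt.of_isClosed_subset hDcl diff_subset
      -- cover Dset by compact open bisections inside Dset
      have hchoice : ∀ d : ↥Dset, ∃ v, E.IsCOB v ∧ (d : G) ∈ v ∧ v ⊆ Dset := by
        intro d
        obtain ⟨v, hv, hdv, hvsub⟩ := 𝒢.ample.exists_subset_of_mem_open d.2 hDo
        exact ⟨v, hv, hdv, hvsub⟩
      choose V hVcob hVmem hVsub using hchoice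
      have hDcover : Dset ⊆ ⋃ d : ↥Dset, V d := fun x hx =>
        Set.mem_iUnion.mpr ⟨⟨x, hx⟩, hVmem _⟩
      obtain ⟨t, ht⟩ := hDc.elim_finite_subcover V (fun d => (hVcob d).2.1) hDcover
      -- shrink inside U₀
      set U₀ := (h ⁻¹' {a}) ∩ E.unitSpace with hU₀def
      have hU₀o : IsOpen U₀ := (hmemh.1 {a}).inter E.isOpen_unitSpace
      have hU₀ne : U₀.Nonempty := ⟨u₀, by rw [hadef]; exact rfl, E.src_mem_unit γ₀⟩
      obtain ⟨W', hW'o, hW'ne, hW'sub, hW'avoid⟩ :=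
        E.shrink_finset heff t V hU₀o hU₀ne (fun j _ =>
          ⟨(hVcob j).1, (hVcob j).2.1, (hVcob j).2.2.1,
            Set.eq_empty_iff_forall_notMem.mpr fun x hx => (hVsub j hx.1).2 hx.2⟩)
      obtain ⟨w₀, hw₀⟩ := hW'ne
      obtain ⟨W, hWcob, hw₀W, hWsub⟩ := 𝒢.ample.exists_subset_of_mem_open hw₀ hW'o
      have hWu : W ⊆ E.unitSpace := fun x hx => (hW'sub (hWsub hx)).2
      have hWa : ∀ x ∈ W, h x = a := fun x hx => (hW'sub (hWsub hx)).1
      have hWne : W.Nonempty := ⟨w₀, hw₀W⟩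
      -- the compressions
      set oneW : G → R := W.indicator fun _ => (1 : R) with honeWdef
      have hmemW : EtaleGroupoid.MemSt oneW := EtaleGroupoid.memSt_indicator hWcob.1 hWcob.2.1 1
      set g₁ := E.convC c h oneW with hg₁def
      have hg₁ : ∀ γ, g₁ γ = if E.src γ ∈ W then h γ else 0 := by
        intro γ
        rw [hg₁def, honeWdef, E.convC_unit_right c hc2 hWu 1 h γ]
        split_ifs with h1
        · rw [mul_one]
        · rfl
      have hmemg₁ : EtaleGroupoid.MemSt g₁ := by
        have heq : g₁ = fun γ => h γ * oneW (E.src γ) := by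
          funext γ
          rw [hg₁ γ]
          by_cases hx : E.src γ ∈ W
          · rw [if_pos hx, honeWdef, Set.indicator_of_mem hx, mul_one]
          · rw [if_neg hx, honeWdef, Set.indicator_of_notMem hx, mul_zero]
        constructor
        · rw [heq]
          exact hmemh.1.mul (hmemW.1.comp_continuous E.continuous_src)
        · refine ⟨K', hK'c, fun γ hγ => hK's ?_⟩
          intro h0
          exact hγ (by rw [hg₁ γ, h0, ite_self])
      have hπg₁ : π g₁ = 0 := by
        rw [hg₁def, hmul h oneW hmemh hmemW, hπh, zero_mul]
      set g := E.convC c oneW g₁ with hgdef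
      have hπg : π g = 0 := by
        rw [hgdef, hmul oneW g₁ hmemW hmemg₁, hπg₁, mul_zero]
      have hgval : g = W.indicator (fun _ => a) := by
        funext γ
        rw [hgdef, honeWdef, E.convC_unit_left c hc1 hWu 1 g₁ γ]
        by_cases hγW : γ ∈ W
        · have hsγ : E.src γ = γ := E.src_unit (hWu hγW)
          have hrγ : E.rng γ = γ := E.rng_unit (hWu hγW)
          rw [if_pos (by rwa [hrγ]), one_mul, hg₁ γ, if_pos (by rwa [hsγ]),
            hWa γ hγW, Set.indicator_of_mem hγW]
        · rw [Set.indicator_of_notMem hγW]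
          split_ifs with h1
          · rw [one_mul, hg₁ γ]
            split_ifs with h2
            · by_contra hne
              have hγsupp : γ ∈ Function.support h := hne
              have hγnu : γ ∉ E.unitSpace := fun hu =>
                hγW (by rw [← E.src_unit hu]; exact h2)
              have hcov : γ ∈ ⋃ j ∈ t, V j := ht ⟨hγsupp, hγnu⟩
              obtain ⟨j, hjt, hjV⟩ := Set.mem_iUnion₂.mp hcov
              exact hW'avoid j hjt γ hjV ⟨hWsub h1, hWsub h2⟩
            · rfl
          · rfl
      have hπa : π (W.indicator fun _ => a) = 0 := by rw [← hgval]; exact hπg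
      have hfac : E.convC c (W.indicator fun _ => a⁻¹) (W.indicator fun _ => a) =
          W.indicator fun _ => (1 : R) := by
        funext γ
        rw [E.convC_unit_left c hc1 hWu a⁻¹ _ γ]
        by_cases hγW : γ ∈ W
        · have hrγ : E.rng γ = γ := E.rng_unit (hWu hγW)
          rw [if_pos (by rwa [hrγ]), Set.indicator_of_mem hγW, Set.indicator_of_mem hγW,
            inv_mul_cancel₀ ha0]
        · simp [Set.indicator_of_notMem hγW]
      have hπ1W : π (W.indicator fun _ => (1 : R)) = 0 := by
        rw [← hfac, hmul _ _ (EtaleGroupoid.memSt_indicator hWcob.1 hWcob.2.1 a⁻¹)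
          (EtaleGroupoid.memSt_indicator hWcob.1 hWcob.2.1 a), hπa, mul_zero]
      exact hW W hWu hWne hWcob.1 hWcob.2.1 hπ1W
    intro f₁ hf₁ f₂ hf₂ heq
    have hmemn : EtaleGroupoid.MemSt (-f₂ : G → R) := EtaleGroupoid.memSt_neg hf₂
    have hπneg : π (-f₂) = -π f₂ := by
      have h1 := hadd f₂ (-f₂) hf₂ hmemn
      rw [add_neg_cancel, hzero] at h1
      exact (neg_eq_of_add_eq_zero_right h1.symm).symm
    have hsub : EtaleGroupoid.MemSt (f₁ + -f₂) := EtaleGroupoid.memSt_add hf₁ hmemn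
    have hπsub : π (f₁ + -f₂) = 0 := by
      rw [hadd f₁ (-f₂) hf₁ hmemn, hπneg, heq, add_neg_cancel]
    have hzero' := key _ hsub hπsub
    funext x
    have h2 := congrFun hzero' x
    simp only [Pi.add_apply, Pi.neg_apply, Pi.zero_apply] at h2
    exact add_neg_eq_zero.mp h2
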